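/- arXiv:0805.3012 — 4 statements merged into one kernel-verified Lean document; each statement's English description precedes it below -/
import Mathlib

section
/- For all k, k' in the torus T = [0,1], the kernel R(k,k') = (4/3)(2 sin²(2πk) sin²(πk') + 2 sin²(2πk') sin²(πk) − sin²(2πk) sin²(2πk')) is nonnegative. -/
open Real

/-- The collision kernel `R(k,k')` of the energy-momentum conserving chain. -/
noncomputable def collisionKernel (k k' : ℝ) : ℝ :=
  (4/3) * (2 * sin (2*π*k)^2 * sin (π*k')^2 + 2 * sin (2*π*k')^2 * sin (π*k)^2
    - sin (2*π*k)^2 * sin (2*π*k')^2)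

/-- the kernel `R` is nonnegative on the torus `[0,1]`. -/
theorem collisionKernel_nonneg :
    ∀ k ∈ Set.Icc (0:ℝ) 1, ∀ k' ∈ Set.Icc (0:ℝ) 1, 0 ≤ collisionKernel k k' := by
  intro k _ k' _
  unfold collisionKernel
  have h1 : sin (2*π*k) = 2 * sin (π*k) * cos (π*k) := by
    rw [show 2*π*k = 2*(π*k) by ring, sin_two_mul]
  have h2 : sin (2*π*k') = 2 * sin (π*k') * cos (π*k') := by
    rw [show 2*π*k' = 2*(π*k') by ring, sin_two_mul]
  have c1 : cos (π*k)^2 = 1 - sin (π*k)^2 := (cos_sq' _)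
  have c2 : cos (π*k')^2 = 1 - sin (π*k')^2 := (cos_sq' _)
  have s1 : sin (π*k)^2 ≤ 1 := sin_sq_le_one _
  have s2 : sin (π*k')^2 ≤ 1 := sin_sq_le_one _
  have n1 : 0 ≤ sin (π*k)^2 := sq_nonneg _
  have n2 : 0 ≤ sin (π*k')^2 := sq_nonneg _
  have e1 : sin (2*π*k)^2 = 4 * sin (π*k)^2 * (1 - sin (π*k)^2) := by
    rw [h1, mul_pow, mul_pow, c1]; ring
  have e2 : sin (2*π*k')^2 = 4 * sin (π*k')^2 * (1 - sin (π*k')^2) := by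
    rw [h2, mul_pow, mul_pow, c2]; ring
  rw [e1, e2]
  nlinarith [mul_nonneg n1 n2, mul_nonneg (mul_nonneg n1 n2) (sub_nonneg.2 s1),
    mul_nonneg (mul_nonneg n1 n2) (sub_nonneg.2 s2),
    mul_nonneg (mul_nonneg (mul_nonneg n1 n2) n1) (sub_nonneg.2 s2),
    mul_nonneg (mul_nonneg (mul_nonneg n1 n2) n2) (sub_nonneg.2 s1)]
end

section
/- Under the same assumptions on α (unpinned case), there is a constant C₁ > 0 with |α̂'(k)| ≤ C₁|k| for all k ∈ [−1/2, 1/2], and the derivative of the dispersion relation ω = √α̂ is bounded: sup_k |ω'(k)| < ∞. -/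
open Real

set_option maxHeartbeats 1600000 in
/-- in the unpinned case `|α̂'(k)| ≤ C₁|k|` and the derivative of
`ω = √α̂` is bounded. -/
theorem dispersion_deriv_bounds (α : ℤ → ℝ)
    (hsymm : ∀ y : ℤ, α (-y) = α y)
    (hdecay : ∃ C₁ > (0:ℝ), ∃ C₂ > (0:ℝ), ∀ y : ℤ, |α y| ≤ C₁ * Real.exp (-C₂ * |(y:ℝ)|))
    (hatα : ℝ → ℝ)
    (hhat : ∀ k : ℝ, hatα k = ∑' z : ℤ, α z * Real.cos (2*π*k*z))
    (hpos : ∀ k ∈ Set.Icc (-(1:ℝ)/2) (1/2), k ≠ 0 → 0 < hatα k)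
    (h0 : hatα 0 = 0)
    (h2 : 0 < iteratedDeriv 2 hatα 0) :
    (∃ C₁ > (0:ℝ), ∀ k ∈ Set.Icc (-(1:ℝ)/2) (1/2), |deriv hatα k| ≤ C₁ * |k|)
    ∧ ∃ M : ℝ, ∀ k ∈ Set.Icc (-(1:ℝ)/2) (1/2),
        |deriv (fun k => Real.sqrt (hatα k)) k| ≤ M := by
  classical
  obtain ⟨Ca, hCa, cb, hcb, hbd⟩ := hdecay
  -- weighted summability
  have hsum : ∀ n : ℕ, Summable (fun z : ℤ => |α z| * |(z:ℝ)| ^ n) := by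
    intro n
    have hr : ‖Real.exp (-cb)‖ < 1 := by
      rw [Real.norm_eq_abs, abs_of_pos (Real.exp_pos _)]
      exact Real.exp_lt_one_iff.mpr (neg_lt_zero.mpr hcb)
    have hnat : Summable (fun m : ℕ => (m:ℝ) ^ n * Real.exp (-cb) ^ m) :=
      summable_pow_mul_geometric_of_norm_lt_one n hr
    have hexp : ∀ m : ℕ, Real.exp (-cb * (m:ℝ)) = Real.exp (-cb) ^ m := by
      intro m; rw [mul_comm, Real.exp_nat_mul]
    have key : Summable (fun z : ℤ => |(z:ℝ)| ^ n * Real.exp (-cb * |(z:ℝ)|)) := by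
      apply Summable.of_nat_of_neg
      · apply hnat.congr
        intro m
        have habs : |((m:ℤ):ℝ)| = (m:ℝ) := by
          push_cast
          exact abs_of_nonneg (by positivity)
        rw [habs, hexp m]
      · apply hnat.congr
        intro m
        have habs : |(((-m:ℤ)):ℝ)| = (m:ℝ) := by
          push_cast
          rw [abs_neg]
          exact abs_of_nonneg (by positivity)
        rw [habs, hexp m]
    apply Summable.of_nonneg_of_le (fun z => by positivity) _ (key.mul_left Ca)
    intro z
    calc |α z| * |(z:ℝ)| ^ n ≤ (Ca * Real.exp (-cb * |(z:ℝ)|)) * |(z:ℝ)| ^ n :=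
          mul_le_mul_of_nonneg_right (hbd z) (by positivity)
      _ = Ca * (|(z:ℝ)| ^ n * Real.exp (-cb * |(z:ℝ)|)) := by ring
  have habs2π : ∀ z : ℤ, |2*π*(z:ℝ)| = (2*π) * |(z:ℝ)| := by
    intro z; rw [abs_mul, abs_of_pos (by positivity : (0:ℝ) < 2*π)]
  -- the term functions
  set F1 : ℤ → ℝ → ℝ := fun z k => α z * Real.cos (2*π*k*z) with hF1
  set F2 : ℤ → ℝ → ℝ := fun z k => -(α z * (2*π*z)) * Real.sin (2*π*k*z) with hF2
  set F3 : ℤ → ℝ → ℝ := fun z k => -(α z * (2*π*z)^2) * Real.cos (2*π*k*z) with hF3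
  set u1 : ℤ → ℝ := fun z => |α z| * |2*π*(z:ℝ)| with hu1def
  set u2 : ℤ → ℝ := fun z => |α z| * |2*π*(z:ℝ)| ^ 2 with hu2def
  have hu1 : Summable u1 := by
    apply ((hsum 1).mul_left (2*π)).congr
    intro z
    simp only [hu1def, habs2π z, pow_one]
    ring
  have hu2 : Summable u2 := by
    apply ((hsum 2).mul_left ((2*π)^2)).congr
    intro z
    simp only [hu2def, habs2π z, mul_pow]
    ring
  -- derivatives of terms
  have hinner : ∀ (z : ℤ) (k : ℝ), HasDerivAt (fun k : ℝ => 2*π*k*(z:ℝ)) (2*π*(z:ℝ)) k := by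
    intro z k
    simpa using (((hasDerivAt_id k).const_mul (2*π)).mul_const (z:ℝ))
  have hder1 : ∀ (z : ℤ) (k : ℝ), HasDerivAt (F1 z) (F2 z k) k := by
    intro z k
    have := ((hinner z k).cos).const_mul (α z)
    simp only [hF1, hF2]
    exact this.congr_deriv (by ring)
  have hder2 : ∀ (z : ℤ) (k : ℝ), HasDerivAt (F2 z) (F3 z k) k := by
    intro z k
    have := ((hinner z k).sin).const_mul (-(α z * (2*π*(z:ℝ))))
    simp only [hF2, hF3]
    exact this.congr_deriv (by ring)
  have hbnd1 : ∀ (z : ℤ) (k : ℝ), ‖F2 z k‖ ≤ u1 z := by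
    intro z k
    have heq : ‖F2 z k‖ = |α z| * |2*π*(z:ℝ)| * |Real.sin (2*π*k*(z:ℝ))| := by
      simp only [hF2, Real.norm_eq_abs]
      rw [abs_mul, abs_neg, abs_mul]
    rw [heq, hu1def]
    have hs : |Real.sin (2*π*k*(z:ℝ))| ≤ 1 := abs_sin_le_one _
    calc |α z| * |2*π*(z:ℝ)| * |Real.sin (2*π*k*(z:ℝ))| ≤ |α z| * |2*π*(z:ℝ)| * 1 :=
          mul_le_mul_of_nonneg_left hs (by positivity)
      _ = |α z| * |2*π*(z:ℝ)| := mul_one _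
  have hbnd2 : ∀ (z : ℤ) (k : ℝ), ‖F3 z k‖ ≤ u2 z := by
    intro z k
    have heq : ‖F3 z k‖ = |α z| * |2*π*(z:ℝ)| ^ 2 * |Real.cos (2*π*k*(z:ℝ))| := by
      simp only [hF3, Real.norm_eq_abs]
      rw [abs_mul, abs_neg, abs_mul, abs_pow]
    rw [heq, hu2def]
    have hs : |Real.cos (2*π*k*(z:ℝ))| ≤ 1 := abs_cos_le_one _
    calc |α z| * |2*π*(z:ℝ)| ^ 2 * |Real.cos (2*π*k*(z:ℝ))| ≤ |α z| * |2*π*(z:ℝ)| ^ 2 * 1 :=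
          mul_le_mul_of_nonneg_left hs (by positivity)
      _ = |α z| * |2*π*(z:ℝ)| ^ 2 := mul_one _
  have habs0 : Summable (fun z : ℤ => |α z|) := by simpa using hsum 0
  have hαs : Summable (fun z : ℤ => α z) := habs0.of_abs
  have hsum10 : Summable (fun z : ℤ => F1 z 0) := by
    apply hαs.congr
    intro z
    simp [hF1]
  have hsum20 : Summable (fun z : ℤ => F2 z 0) := by
    have : (fun z : ℤ => F2 z 0) = fun _ => (0:ℝ) := by
      funext z; simp [hF2]
    rw [this]
    exact summable_zero
  set G1 : ℝ → ℝ := fun k => ∑' z : ℤ, F2 z k with hG1def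
  set G2 : ℝ → ℝ := fun k => ∑' z : ℤ, F3 z k with hG2def
  have hfun : hatα = fun k => ∑' z : ℤ, F1 z k := funext hhat
  have hg : ∀ k : ℝ, HasDerivAt hatα (G1 k) k := by
    intro k
    rw [hfun]
    exact hasDerivAt_tsum hu1 hder1 hbnd1 hsum10 k
  have hg2 : ∀ k : ℝ, HasDerivAt G1 (G2 k) k := by
    intro k
    exact hasDerivAt_tsum hu2 hder2 hbnd2 hsum20 k
  have hderiv : deriv hatα = G1 := funext fun k => (hg k).deriv
  set B : ℝ := ∑' z : ℤ, u2 z with hBdef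
  have hBnonneg : 0 ≤ B := tsum_nonneg (fun z => by simp only [hu2def]; positivity)
  have hG1bound : ∀ k : ℝ, |G1 k| ≤ B * |k| := by
    intro k
    have hnorm : ∀ z : ℤ, ‖F2 z k‖ ≤ u2 z * |k| := by
      intro z
      have heq2 : ‖F2 z k‖ = |α z| * |2*π*(z:ℝ)| * |Real.sin (2*π*k*(z:ℝ))| := by
        simp only [hF2, Real.norm_eq_abs]
        rw [abs_mul, abs_neg, abs_mul]
      rw [heq2, hu2def]
      have hs : |Real.sin (2*π*k*(z:ℝ))| ≤ |2*π*(z:ℝ)| * |k| := by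
        calc |Real.sin (2*π*k*(z:ℝ))| ≤ |2*π*k*(z:ℝ)| := Real.abs_sin_le_abs
          _ = |2*π*(z:ℝ)| * |k| := by
              rw [show 2*π*k*(z:ℝ) = (2*π*(z:ℝ)) * k by ring, abs_mul]
      calc |α z| * |2*π*(z:ℝ)| * |Real.sin (2*π*k*(z:ℝ))|
          ≤ |α z| * |2*π*(z:ℝ)| * (|2*π*(z:ℝ)| * |k|) := by
            apply mul_le_mul_of_nonneg_left hs (by positivity)
        _ = |α z| * |2*π*(z:ℝ)| ^ 2 * |k| := by ring
    have hs1 : Summable (fun z : ℤ => ‖F2 z k‖) :=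
      Summable.of_nonneg_of_le (fun z => norm_nonneg _) hnorm (hu2.mul_right |k|)
    calc |G1 k| = ‖∑' z : ℤ, F2 z k‖ := (Real.norm_eq_abs _).symm
      _ ≤ ∑' z : ℤ, ‖F2 z k‖ := norm_tsum_le_tsum_norm hs1
      _ ≤ ∑' z : ℤ, u2 z * |k| := Summable.tsum_le_tsum hnorm hs1 (hu2.mul_right |k|)
      _ = B * |k| := by rw [tsum_mul_right]
  -- part 1
  have part1 : ∀ k ∈ Set.Icc (-(1:ℝ)/2) (1/2), |deriv hatα k| ≤ (B+1) * |k| := by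
    intro k _
    rw [hderiv]
    have := hG1bound k
    nlinarith [abs_nonneg k]
  refine ⟨⟨B+1, by linarith, part1⟩, ?_⟩
  -- continuity of G2
  have hG2cont : Continuous G2 := by
    apply continuous_tsum _ hu2 hbnd2
    intro z
    simp only [hF3]
    fun_prop
  -- evenness of hatα
  have heven : ∀ k : ℝ, hatα (-k) = hatα k := by
    intro k
    rw [hhat, hhat]
    apply tsum_congr
    intro z
    rw [show 2*π*(-k)*(z:ℝ) = -(2*π*k*(z:ℝ)) by ring, Real.cos_neg]
  -- second derivative at 0
  have hG20 : 0 < G2 0 := by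
    have h21 : iteratedDeriv 2 hatα 0 = G2 0 := by
      rw [show (2:ℕ) = 1 + 1 from rfl, iteratedDeriv_succ, iteratedDeriv_one, hderiv]
      exact (hg2 0).deriv
    rwa [h21] at h2
  set q : ℝ := G2 0 with hqdef
  -- G2 ≥ q/2 near 0
  obtain ⟨δ, hδpos, hδ⟩ := Metric.continuousAt_iff.mp hG2cont.continuousAt (q/2) (by linarith)
  have hnear : ∀ t : ℝ, |t| ≤ δ/2 → q/2 ≤ G2 t := by
    intro t ht
    have hd : dist t 0 < δ := by rw [Real.dist_eq, sub_zero]; linarith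
    have := hδ hd
    rw [Real.dist_eq] at this
    have := abs_lt.mp this
    linarith [this.1]
  set δ' : ℝ := min (δ/2) (1/2) with hδ'def
  have hδ'pos : 0 < δ' := lt_min (by linarith) (by norm_num)
  have hδ'le : δ' ≤ 1/2 := min_le_right _ _
  have hδ'δ : δ' ≤ δ/2 := min_le_left _ _
  -- G1 0 = 0
  have hG10 : G1 0 = 0 := by
    have hz : ∀ z : ℤ, F2 z 0 = 0 := by intro z; simp [hF2]
    have : G1 0 = ∑' z : ℤ, F2 z 0 := rfl
    rw [this, tsum_congr hz, tsum_zero]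
  -- ψ monotone on [-δ', δ']
  set ψ : ℝ → ℝ := fun t => G1 t - q/2 * t with hψdef
  have hψd : ∀ k : ℝ, HasDerivAt ψ (G2 k - q/2) k := by
    intro k
    exact (hg2 k).sub (by simpa using (hasDerivAt_id k).const_mul (q/2))
  have hψdiff : Differentiable ℝ ψ := fun k => (hψd k).differentiableAt
  have hψderiv : deriv ψ = fun k => G2 k - q/2 := funext fun k => (hψd k).deriv
  have hψmono : MonotoneOn ψ (Set.Icc (-δ') δ') := by
    apply monotoneOn_of_deriv_nonneg (convex_Icc _ _) hψdiff.continuous.continuousOn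
      hψdiff.differentiableOn
    intro x hx
    rw [interior_Icc] at hx
    rw [hψderiv]
    have hxa : |x| ≤ δ/2 := by
      rw [abs_le]
      constructor <;> [linarith [hx.1, hδ'δ]; linarith [hx.2, hδ'δ]]
    linarith [hnear x hxa]
  have hψnonneg : ∀ t : ℝ, 0 ≤ t → t ≤ δ' → 0 ≤ ψ t := by
    intro t ht0 htδ
    have h0mem : (0:ℝ) ∈ Set.Icc (-δ') δ' := ⟨by linarith, by linarith⟩
    have htm : t ∈ Set.Icc (-δ') δ' := ⟨by linarith, htδ⟩
    have := hψmono h0mem htm ht0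
    simpa [hψdef, hG10] using this
  -- φ monotone on [0, δ']
  set φ : ℝ → ℝ := fun t => hatα t - q/4 * t^2 with hφdef
  have hφd : ∀ k : ℝ, HasDerivAt φ (ψ k) k := by
    intro k
    have h2' : HasDerivAt (fun t : ℝ => q/4 * t^2) (q/2 * k) k := by
      have := (hasDerivAt_pow 2 k).const_mul (q/4)
      exact this.congr_deriv (by push_cast; ring)
    exact (hg k).sub h2'
  have hφdiff : Differentiable ℝ φ := fun k => (hφd k).differentiableAt
  have hφderiv : deriv φ = ψ := funext fun k => (hφd k).deriv
  have hφmono : MonotoneOn φ (Set.Icc 0 δ') := by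
    apply monotoneOn_of_deriv_nonneg (convex_Icc _ _) hφdiff.continuous.continuousOn
      hφdiff.differentiableOn
    intro x hx
    rw [interior_Icc] at hx
    rw [hφderiv]
    exact hψnonneg x hx.1.le hx.2.le
  have hquad : ∀ t : ℝ, 0 ≤ t → t ≤ δ' → q/4 * t^2 ≤ hatα t := by
    intro t ht0 htδ
    have h0mem : (0:ℝ) ∈ Set.Icc (0:ℝ) δ' := ⟨le_refl _, hδ'pos.le⟩
    have htm : t ∈ Set.Icc (0:ℝ) δ' := ⟨ht0, htδ⟩
    have := hφmono h0mem htm ht0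
    simp only [hφdef, h0] at this
    nlinarith [this]
  have hquad' : ∀ t : ℝ, |t| ≤ δ' → q/4 * t^2 ≤ hatα t := by
    intro t ht
    rcases le_total 0 t with h | h
    · exact hquad t h (by rwa [abs_of_nonneg h] at ht)
    · have h1 : q/4 * (-t)^2 ≤ hatα (-t) :=
        hquad (-t) (by linarith) (by rwa [abs_of_nonpos h] at ht)
      calc q/4 * t^2 = q/4 * (-t)^2 := by ring
        _ ≤ hatα (-t) := h1
        _ = hatα t := heven t
  -- minimum on [δ', 1/2]
  have hdiffα : Differentiable ℝ hatα := fun k => (hg k).differentiableAt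
  have hcont : Continuous hatα := hdiffα.continuous
  obtain ⟨k₀, hk₀, hminOn⟩ := (isCompact_Icc : IsCompact (Set.Icc δ' (1/2:ℝ))).exists_isMinOn
    ⟨δ', le_refl _, hδ'le⟩ hcont.continuousOn
  have hmin : ∀ t ∈ Set.Icc δ' (1/2:ℝ), hatα k₀ ≤ hatα t := fun t ht => isMinOn_iff.mp hminOn t ht
  have hm : 0 < hatα k₀ := by
    apply hpos k₀ ⟨by linarith [hk₀.1], hk₀.2⟩
    exact ne_of_gt (lt_of_lt_of_le hδ'pos hk₀.1)
  set s1 : ℝ := Real.sqrt (q/4) with hs1def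
  have hs1pos : 0 < s1 := Real.sqrt_pos.mpr (by linarith)
  set sm : ℝ := Real.sqrt (hatα k₀) with hsmdef
  have hsmpos : 0 < sm := Real.sqrt_pos.mpr hm
  set M : ℝ := max (B / (2*s1)) (B / (2*sm)) with hMdef
  have hM0 : 0 ≤ M := le_trans (div_nonneg hBnonneg (by positivity)) (le_max_left _ _)
  refine ⟨M, ?_⟩
  intro k hk
  by_cases hk0 : k = 0
  · subst hk0
    have hz : deriv (fun k : ℝ => Real.sqrt (hatα k)) 0 = 0 := by
      have hFe : (fun k : ℝ => Real.sqrt (hatα k)) = (fun k : ℝ => Real.sqrt (hatα (-k))) := by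
        funext t; rw [heven]
      have hcn : deriv (fun k : ℝ => Real.sqrt (hatα (-k))) 0
          = - deriv (fun k : ℝ => Real.sqrt (hatα k)) (-0) :=
        deriv_comp_neg (f := fun k : ℝ => Real.sqrt (hatα k)) (x := 0)
      rw [neg_zero] at hcn
      have := hFe ▸ hcn
      nlinarith [this]
    rw [hz, abs_zero]
    exact hM0
  · have hpk : 0 < hatα k := hpos k hk hk0
    have hω : HasDerivAt (fun t : ℝ => Real.sqrt (hatα t)) (G1 k / (2*Real.sqrt (hatα k))) k :=
      (hg k).sqrt (ne_of_gt hpk)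
    rw [hω.deriv]
    have hsq : 0 < Real.sqrt (hatα k) := Real.sqrt_pos.mpr hpk
    rw [abs_div, abs_of_pos (by positivity : (0:ℝ) < 2*Real.sqrt (hatα k))]
    have hkabs : |k| ≤ 1/2 := abs_le.mpr ⟨by linarith [hk.1], hk.2⟩
    have hkpos : 0 < |k| := abs_pos.mpr hk0
    rcases le_or_gt |k| δ' with hc | hc
    · -- near zero: use quadratic lower bound
      have hq : q/4 * k^2 ≤ hatα k := hquad' k hc
      have h1 : s1 * |k| ≤ Real.sqrt (hatα k) := by
        have hle : Real.sqrt (q/4 * k^2) ≤ Real.sqrt (hatα k) := Real.sqrt_le_sqrt hq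
        rwa [Real.sqrt_mul (by linarith : (0:ℝ) ≤ q/4), Real.sqrt_sq_eq_abs] at hle
      have hstep : |G1 k| / (2*Real.sqrt (hatα k)) ≤ (B*|k|) / ((2*s1)*|k|) := by
        apply div_le_div₀ (mul_nonneg hBnonneg (abs_nonneg k)) (hG1bound k)
          (mul_pos (mul_pos two_pos hs1pos) hkpos)
        calc (2*s1)*|k| = 2*(s1*|k|) := by ring
          _ ≤ 2*Real.sqrt (hatα k) := by linarith
      have heq : (B*|k|) / ((2*s1)*|k|) = B / (2*s1) :=
        mul_div_mul_right _ _ (ne_of_gt hkpos)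
      exact le_trans (hstep.trans_eq heq) (le_max_left _ _)
    · -- away from zero: use compact minimum
      have hkm : hatα k₀ ≤ hatα k := by
        rcases le_total 0 k with h | h
        · refine hmin k ⟨?_, hk.2⟩
          rw [abs_of_nonneg h] at hc
          linarith
        · rw [← heven k]
          apply hmin (-k)
          rw [abs_of_nonpos h] at hc hkabs
          exact ⟨hc.le, hkabs⟩
      have h1 : sm ≤ Real.sqrt (hatα k) := Real.sqrt_le_sqrt hkm
      have hnum : |G1 k| ≤ B := by
        nlinarith [hG1bound k, hBnonneg, hkabs, abs_nonneg k]
      have hstep : |G1 k| / (2*Real.sqrt (hatα k)) ≤ B / (2*sm) :=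
        div_le_div₀ hBnonneg hnum (mul_pos two_pos hsmpos) (by linarith)
      exact le_trans hstep (le_max_right _ _)
end

section
/- Let ω be the dispersion relation of the unpinned case. For p ∈ ℝ there is C₄ > 0 such that for all k with |k| > ε|p| and all ε > 0, |ε⁻¹(ω(k+εp/2) − ω(k−εp/2)) − p·ω'(k)| ≤ ε C₄ |p|²/|k|. -/
open Real

lemma sum_exp_aux (C₂ : ℝ) (hC₂ : 0 < C₂) (n : ℕ) :
    Summable (fun z : ℤ => |(z:ℝ)|^n * Real.exp (-C₂ * |(z:ℝ)|)) := by
  have hnat : Summable (fun m : ℕ => |(m:ℝ)|^n * Real.exp (-C₂ * |(m:ℝ)|)) := by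
    have hr : Real.exp (-C₂) < 1 := Real.exp_lt_one_iff.mpr (by linarith)
    have := summable_pow_mul_geometric_of_norm_lt_one (R := ℝ) n
      (r := Real.exp (-C₂)) (by rw [Real.norm_eq_abs, abs_of_pos (Real.exp_pos _)]; exact hr)
    refine this.congr fun m => ?_
    rw [abs_of_nonneg (Nat.cast_nonneg m), ← Real.exp_nat_mul]
    ring_nf
  apply Summable.of_nat_of_neg_add_one
  · exact hnat.congr fun m => by norm_num
  · refine hnat.comp_injective (Nat.succ_injective) |>.congr fun m => ?_
    show |((m+1:ℕ):ℝ)| ^ n * rexp (-C₂ * |((m+1:ℕ):ℝ)|)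
        = |((-(m+1):ℤ):ℝ)| ^ n * rexp (-C₂ * |((-(m+1):ℤ):ℝ)|)
    push_cast
    rw [abs_neg]

lemma inner_deriv (z k : ℝ) : HasDerivAt (fun k : ℝ => 2*π*k*z) (2*π*z) k := by
  have := ((hasDerivAt_id k).const_mul (2*π)).mul_const z
  simpa [mul_assoc, mul_comm, mul_left_comm] using this

lemma term_d0 (a z k : ℝ) :
    HasDerivAt (fun k => a * Real.cos (2*π*k*z)) (a * (-Real.sin (2*π*k*z) * (2*π*z))) k :=
  ((inner_deriv z k).cos).const_mul a

lemma term_d1 (a z k : ℝ) :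
    HasDerivAt (fun k => a * (-Real.sin (2*π*k*z) * (2*π*z)))
      (a * (-(Real.cos (2*π*k*z) * (2*π*z)) * (2*π*z))) k :=
  ((((inner_deriv z k).sin).neg).mul_const (2*π*z)).const_mul a

noncomputable def A1f (α : ℤ → ℝ) (k : ℝ) : ℝ :=
  ∑' z : ℤ, α z * (-Real.sin (2*π*k*z) * (2*π*z))

noncomputable def A2f (α : ℤ → ℝ) (k : ℝ) : ℝ :=
  ∑' z : ℤ, α z * (-(Real.cos (2*π*k*z) * (2*π*z)) * (2*π*z))

section
variable {α : ℤ → ℝ} {C₁ C₂ : ℝ}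

lemma sum_u1 (hC₂ : 0 < C₂) :
    Summable (fun z : ℤ => C₁ * Real.exp (-C₂*|(z:ℝ)|) * (2*π*|(z:ℝ)|)) := by
  refine ((sum_exp_aux C₂ hC₂ 1).mul_left (C₁ * (2*π))).congr fun z => ?_
  ring

lemma sum_u2 (hC₂ : 0 < C₂) :
    Summable (fun z : ℤ => C₁ * Real.exp (-C₂*|(z:ℝ)|) * (2*π*|(z:ℝ)|)^2) := by
  refine ((sum_exp_aux C₂ hC₂ 2).mul_left (C₁ * (2*π)^2)).congr fun z => ?_
  ring

lemma bound1 (hα : ∀ y : ℤ, |α y| ≤ C₁ * Real.exp (-C₂ * |(y:ℝ)|)) (z : ℤ) (k : ℝ) :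
    ‖α z * (-Real.sin (2*π*k*z) * (2*π*(z:ℝ)))‖
      ≤ C₁ * Real.exp (-C₂*|(z:ℝ)|) * (2*π*|(z:ℝ)|) := by
  rw [Real.norm_eq_abs, abs_mul]
  have e : |2*π*(z:ℝ)| = 2*π*|(z:ℝ)| := by
    rw [abs_mul, abs_mul, abs_two, abs_of_pos Real.pi_pos]
  have h2 : |(-Real.sin (2*π*k*z) * (2*π*(z:ℝ)))| ≤ 2*π*|(z:ℝ)| := by
    rw [abs_mul, abs_neg, e]
    have h1 := abs_sin_le_one (2*π*k*(z:ℝ))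
    have hw : (0:ℝ) ≤ 2*π*|(z:ℝ)| := by positivity
    calc |Real.sin (2*π*k*(z:ℝ))| * (2*π*|(z:ℝ)|) ≤ 1 * (2*π*|(z:ℝ)|) :=
          mul_le_mul_of_nonneg_right h1 hw
      _ = 2*π*|(z:ℝ)| := one_mul _
  exact mul_le_mul (hα z) h2 (abs_nonneg _) ((abs_nonneg _).trans (hα z))

lemma bound2 (hα : ∀ y : ℤ, |α y| ≤ C₁ * Real.exp (-C₂ * |(y:ℝ)|)) (z : ℤ) (k : ℝ) :
    ‖α z * (-(Real.cos (2*π*k*z) * (2*π*(z:ℝ))) * (2*π*(z:ℝ)))‖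
      ≤ C₁ * Real.exp (-C₂*|(z:ℝ)|) * (2*π*|(z:ℝ)|)^2 := by
  rw [Real.norm_eq_abs, abs_mul]
  have e : |2*π*(z:ℝ)| = 2*π*|(z:ℝ)| := by
    rw [abs_mul, abs_mul, abs_two, abs_of_pos Real.pi_pos]
  have h2 : |(-(Real.cos (2*π*k*z) * (2*π*(z:ℝ))) * (2*π*(z:ℝ)))| ≤ (2*π*|(z:ℝ)|)^2 := by
    rw [abs_mul, abs_neg, abs_mul, e]
    have h1 := abs_cos_le_one (2*π*k*(z:ℝ))
    have hw : (0:ℝ) ≤ 2*π*|(z:ℝ)| := by positivity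
    calc |Real.cos (2*π*k*(z:ℝ))| * (2*π*|(z:ℝ)|) * (2*π*|(z:ℝ)|)
        ≤ (1 * (2*π*|(z:ℝ)|)) * (2*π*|(z:ℝ)|) :=
          mul_le_mul_of_nonneg_right
            (mul_le_mul_of_nonneg_right h1 hw) hw
      _ = (2*π*|(z:ℝ)|)^2 := by ring
  exact mul_le_mul (hα z) h2 (abs_nonneg _) ((abs_nonneg _).trans (hα z))

lemma sum_f0 (hC₂ : 0 < C₂) (hα : ∀ y : ℤ, |α y| ≤ C₁ * Real.exp (-C₂ * |(y:ℝ)|)) (k : ℝ) :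
    Summable (fun z : ℤ => α z * Real.cos (2*π*k*z)) := by
  refine Summable.of_norm_bounded ((sum_exp_aux C₂ hC₂ 0).mul_left C₁) fun z => ?_
  rw [Real.norm_eq_abs, abs_mul, pow_zero, one_mul]
  calc |α z| * |Real.cos (2*π*k*z)| ≤ |α z| * 1 :=
        mul_le_mul_of_nonneg_left (abs_cos_le_one _) (abs_nonneg _)
    _ = |α z| := mul_one _
    _ ≤ C₁ * Real.exp (-C₂*(|(z:ℝ)|)) := hα z

lemma sum_f1 (hC₂ : 0 < C₂) (hα : ∀ y : ℤ, |α y| ≤ C₁ * Real.exp (-C₂ * |(y:ℝ)|)) (k : ℝ) :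
    Summable (fun z : ℤ => α z * (-Real.sin (2*π*k*z) * (2*π*(z:ℝ)))) :=
  Summable.of_norm_bounded (sum_u1 hC₂) (fun z => bound1 hα z k)

lemma hat_hasDeriv (hC₂ : 0 < C₂) (hα : ∀ y : ℤ, |α y| ≤ C₁ * Real.exp (-C₂ * |(y:ℝ)|)) (k : ℝ) :
    HasDerivAt (fun k => ∑' z : ℤ, α z * Real.cos (2*π*k*z)) (A1f α k) k :=
  hasDerivAt_tsum (sum_u1 hC₂) (fun z y => term_d0 (α z) z y)
    (fun z y => bound1 hα z y) (sum_f0 hC₂ hα 0) k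

lemma A1_hasDeriv (hC₂ : 0 < C₂) (hα : ∀ y : ℤ, |α y| ≤ C₁ * Real.exp (-C₂ * |(y:ℝ)|)) (k : ℝ) :
    HasDerivAt (A1f α) (A2f α k) k :=
  hasDerivAt_tsum (sum_u2 hC₂) (fun z y => term_d1 (α z) z y)
    (fun z y => bound2 hα z y) (sum_f1 hC₂ hα 0) k

lemma A2_cont (hC₂ : 0 < C₂) (hα : ∀ y : ℤ, |α y| ≤ C₁ * Real.exp (-C₂ * |(y:ℝ)|)) :
    Continuous (A2f α) := by
  refine continuous_tsum (fun z => ?_) (sum_u2 hC₂) (fun z k => bound2 hα z k)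
  fun_prop

lemma A1_zero : A1f α 0 = 0 := by
  unfold A1f
  have : ∀ z : ℤ, α z * (-Real.sin (2*π*0*z) * (2*π*(z:ℝ))) = 0 := by
    intro z; simp
  simp [this]

lemma A2_bound (hC₂ : 0 < C₂) (hα : ∀ y : ℤ, |α y| ≤ C₁ * Real.exp (-C₂ * |(y:ℝ)|)) (k : ℝ) :
    |A2f α k| ≤ ∑' z : ℤ, C₁ * Real.exp (-C₂*|(z:ℝ)|) * (2*π*|(z:ℝ)|)^2 := by
  rw [← Real.norm_eq_abs]
  exact tsum_of_norm_bounded (sum_u2 hC₂).hasSum (fun z => bound2 hα z k)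

lemma A1_bound (hC₂ : 0 < C₂) (hα : ∀ y : ℤ, |α y| ≤ C₁ * Real.exp (-C₂ * |(y:ℝ)|)) (k : ℝ) :
    |A1f α k| ≤ (∑' z : ℤ, C₁ * Real.exp (-C₂*|(z:ℝ)|) * (2*π*|(z:ℝ)|)^2) * |k| := by
  have := Convex.norm_image_sub_le_of_norm_hasDerivWithin_le
    (f := A1f α) (f' := A2f α) (s := Set.univ)
    (fun x _ => (A1_hasDeriv hC₂ hα x).hasDerivWithinAt)
    (fun x _ => by rw [Real.norm_eq_abs]; exact A2_bound hC₂ hα x)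
    convex_univ (Set.mem_univ 0) (Set.mem_univ k)
  simpa [A1_zero, Real.norm_eq_abs] using this

end

noncomputable def Wf (α : ℤ → ℝ) (h : ℝ → ℝ) (x : ℝ) : ℝ := A1f α x / (2 * Real.sqrt (h x))

noncomputable def Ef (α : ℤ → ℝ) (h : ℝ → ℝ) (x : ℝ) : ℝ :=
  (A2f α x * (2 * Real.sqrt (h x)) - A1f α x * (2 * (A1f α x / (2 * Real.sqrt (h x)))))
    / (2 * Real.sqrt (h x))^2

section
variable {α : ℤ → ℝ} {C₁ C₂ : ℝ} {hatα : ℝ → ℝ}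

lemma hatD' (hC₂ : 0 < C₂) (hα : ∀ y : ℤ, |α y| ≤ C₁ * Real.exp (-C₂ * |(y:ℝ)|))
    (hhat : ∀ k : ℝ, hatα k = ∑' z : ℤ, α z * Real.cos (2*π*k*z)) (k : ℝ) :
    HasDerivAt hatα (A1f α k) k := by
  have : hatα = fun k => ∑' z : ℤ, α z * Real.cos (2*π*k*z) := funext hhat
  rw [this]
  exact hat_hasDeriv hC₂ hα k

lemma W_hasDeriv (hC₂ : 0 < C₂) (hα : ∀ y : ℤ, |α y| ≤ C₁ * Real.exp (-C₂ * |(y:ℝ)|))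
    (hhat : ∀ k : ℝ, hatα k = ∑' z : ℤ, α z * Real.cos (2*π*k*z)) (x : ℝ)
    (hx : hatα x ≠ 0) :
    HasDerivAt (fun y => Real.sqrt (hatα y)) (Wf α hatα x) x :=
  (hatD' hC₂ hα hhat x).sqrt hx

lemma Wf_hasDeriv (hC₂ : 0 < C₂) (hα : ∀ y : ℤ, |α y| ≤ C₁ * Real.exp (-C₂ * |(y:ℝ)|))
    (hhat : ∀ k : ℝ, hatα k = ∑' z : ℤ, α z * Real.cos (2*π*k*z)) (x : ℝ)
    (hx : 0 < hatα x) :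
    HasDerivAt (Wf α hatα) (Ef α hatα x) x := by
  have hne := ne_of_gt hx
  have hsp : 0 < Real.sqrt (hatα x) := Real.sqrt_pos.mpr hx
  have h := (A1_hasDeriv hC₂ hα x).div
    (((hatD' hC₂ hα hhat x).sqrt hne).const_mul 2) (by positivity)
  exact h

lemma Ef_eq (x : ℝ) (hx : 0 < hatα x) :
    Ef α hatα x = A2f α x / (2 * Real.sqrt (hatα x))
      - (A1f α x)^2 / (4 * (Real.sqrt (hatα x))^3) := by
  have hsp : 0 < Real.sqrt (hatα x) := Real.sqrt_pos.mpr hx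
  have hne : Real.sqrt (hatα x) ≠ 0 := ne_of_gt hsp
  unfold Ef
  field_simp
  ring

lemma Ef_bound {S₂ c : ℝ} (hc : 0 < c) (hS₂ : 0 < S₂) (x : ℝ)
    (hA2b : |A2f α x| ≤ S₂) (hA1b : |A1f α x| ≤ S₂*|x|)
    (hsq : Real.sqrt c * |x| ≤ Real.sqrt (hatα x)) (hx : 0 < |x|) :
    |Ef α hatα x| ≤ (S₂/(2*Real.sqrt c) + S₂^2/(4*c*Real.sqrt c)) / |x| := by
  have hcs : 0 < Real.sqrt c := Real.sqrt_pos.mpr hc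
  have hsp : 0 < Real.sqrt (hatα x) := lt_of_lt_of_le (by positivity) hsq
  have hpos : 0 < hatα x := by
    have := Real.sqrt_pos.mp hsp; exact this
  set s := Real.sqrt (hatα x) with hs
  have h1 : |A2f α x / (2*s)| ≤ (S₂/(2*Real.sqrt c)) / |x| := by
    rw [abs_div, abs_of_pos (by positivity : (0:ℝ) < 2*s), div_div]
    exact div_le_div₀ hS₂.le hA2b (by positivity) (by nlinarith)
  have h2 : |(A1f α x)^2/(4*s^3)| ≤ (S₂^2/(4*c*Real.sqrt c)) / |x| := by
    rw [abs_div, abs_of_pos (by positivity : (0:ℝ) < 4*s^3), abs_pow]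
    have ha : |A1f α x|^2 ≤ (S₂*|x|)^2 := pow_le_pow_left₀ (abs_nonneg _) hA1b 2
    have hb : 4*(Real.sqrt c*|x|)^3 ≤ 4*s^3 :=
      mul_le_mul_of_nonneg_left (pow_le_pow_left₀ (by positivity) hsq 3) (by norm_num)
    calc |A1f α x|^2/(4*s^3) ≤ (S₂*|x|)^2/(4*(Real.sqrt c*|x|)^3) :=
          div_le_div₀ (by positivity) ha (by positivity) hb
      _ = (S₂^2/(4*c*Real.sqrt c)) / |x| := by
          have hcs2 : Real.sqrt c ^ 2 = c := Real.sq_sqrt hc.le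
          have e3 : (Real.sqrt c*|x|)^3 = (c*Real.sqrt c)*|x|^3 := by
            rw [mul_pow, show (Real.sqrt c)^3 = Real.sqrt c^2 * Real.sqrt c from by ring, hcs2]
          rw [e3]
          field_simp
  calc |Ef α hatα x| = |A2f α x/(2*s) - (A1f α x)^2/(4*s^3)| := by rw [Ef_eq x hpos]
    _ ≤ |A2f α x/(2*s)| + |(A1f α x)^2/(4*s^3)| := by
        rw [sub_eq_add_neg]
        exact (abs_add_le _ _).trans (by rw [abs_neg])
    _ ≤ (S₂/(2*Real.sqrt c)) / |x| + (S₂^2/(4*c*Real.sqrt c)) / |x| := add_le_add h1 h2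
    _ = (S₂/(2*Real.sqrt c) + S₂^2/(4*c*Real.sqrt c)) / |x| := by rw [← add_div]

end

section
variable {α : ℤ → ℝ} {C₁ C₂ : ℝ} {hatα : ℝ → ℝ}

lemma quad_lower (hC₂ : 0 < C₂) (hα : ∀ y : ℤ, |α y| ≤ C₁ * Real.exp (-C₂ * |(y:ℝ)|))
    (hhat : ∀ k : ℝ, hatα k = ∑' z : ℤ, α z * Real.cos (2*π*k*z))
    (hpos : ∀ k ∈ Set.Icc (-(1:ℝ)/2) (1/2), k ≠ 0 → 0 < hatα k)
    (h0 : hatα 0 = 0) (hA20 : 0 < A2f α 0) :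
    ∃ c > (0:ℝ), ∀ x : ℝ, |x| ≤ 3/4 → c * x^2 ≤ hatα x := by
  obtain ⟨δ, hδ, hδ2⟩ := Metric.continuousAt_iff.mp ((A2_cont hC₂ hα).continuousAt (x := 0))
    (A2f α 0 / 4) (by positivity)
  have hQ1 : ∀ x : ℝ, |x| ≤ δ/2 → |A1f α x - x * A2f α 0| ≤ (A2f α 0/4) * |x| := by
    intro x hx
    have hmem : x ∈ Set.Icc (-(δ/2)) (δ/2) := by
      constructor
      · linarith [(abs_le.mp hx).1]
      · linarith [(abs_le.mp hx).2]
    have h0mem : (0:ℝ) ∈ Set.Icc (-(δ/2)) (δ/2) := by constructor <;> linarith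
    have := Convex.norm_image_sub_le_of_norm_hasDerivWithin_le
      (f := fun y => A1f α y - y * A2f α 0) (f' := fun y => A2f α y - A2f α 0)
      (s := Set.Icc (-(δ/2)) (δ/2))
      (fun y _ => ((by exact
        ((A1_hasDeriv hC₂ hα y).sub ((hasDerivAt_id y).mul_const (A2f α 0))).congr_deriv (by simp)
          : HasDerivAt (fun y => A1f α y - y * A2f α 0) (A2f α y - A2f α 0) y)).hasDerivWithinAt)
      (fun y hy => by
        rw [Real.norm_eq_abs, ← Real.dist_eq]
        have hyd : dist y 0 < δ := by
          rw [Real.dist_eq, sub_zero]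
          have h1 := abs_le.mpr ⟨hy.1, hy.2⟩
          have : |y| ≤ δ/2 := h1
          linarith [abs_nonneg y]
        exact (hδ2 hyd).le)
      (convex_Icc _ _) h0mem hmem
    simpa [A1_zero, Real.norm_eq_abs] using this
  have hQ2 : ∀ x : ℝ, |x| ≤ δ/2 → (A2f α 0/4) * x^2 ≤ hatα x := by
    intro x hx
    have hmemx : x ∈ Set.Icc (-|x|) (|x|) := ⟨neg_abs_le x, le_abs_self x⟩
    have h0mem : (0:ℝ) ∈ Set.Icc (-|x|) (|x|) :=
      ⟨neg_nonpos_of_nonneg (abs_nonneg x), abs_nonneg x⟩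
    have key := Convex.norm_image_sub_le_of_norm_hasDerivWithin_le
      (f := fun y => hatα y - y^2 * (A2f α 0/2)) (f' := fun y => A1f α y - y * A2f α 0)
      (s := Set.Icc (-|x|) (|x|))
      (fun y _ => by
        have h := (hatD' hC₂ hα hhat y).sub ((hasDerivAt_pow 2 y).mul_const (A2f α 0/2))
        have e2 : A1f α y - y * A2f α 0 = A1f α y - ((2:ℕ) * y^(2-1)) * (A2f α 0/2) := by
          norm_num; ring
        show HasDerivWithinAt (fun y => hatα y - y^2 * (A2f α 0/2))
          (A1f α y - y * A2f α 0) (Set.Icc (-|x|) (|x|)) y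
        rw [e2]
        exact h.hasDerivWithinAt)
      (fun y hy => by
        rw [Real.norm_eq_abs]
        have hy' : |y| ≤ |x| := abs_le.mpr ⟨hy.1, hy.2⟩
        calc |A1f α y - y * A2f α 0| ≤ (A2f α 0/4) * |y| := hQ1 y (le_trans hy' hx)
          _ ≤ (A2f α 0/4) * |x| := by nlinarith)
      (convex_Icc _ _) h0mem hmemx
    rw [Real.norm_eq_abs, Real.norm_eq_abs, sub_zero] at key
    have key' : |(hatα x - x^2*(A2f α 0/2)) - (hatα 0 - 0^2*(A2f α 0/2))| ≤ A2f α 0/4 * |x| * |x| := key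
    have e0 : hatα 0 - 0^2*(A2f α 0/2) = 0 := by rw [h0]; ring
    rw [e0, sub_zero] at key'
    replace key := key'
    have hxx : |x| * |x| = x^2 := by rw [abs_mul_abs_self]; exact (pow_two x).symm
    have hkey1 := (abs_le.mp key).1
    have e1 : (A2f α 0/4*|x|)*|x| = (A2f α 0/4)*x^2 := by rw [mul_assoc, hxx]
    nlinarith [hkey1]
  have hper : ∀ x : ℝ, hatα (x+1) = hatα x := by
    intro x
    rw [hhat, hhat]
    refine tsum_congr fun z => ?_
    have e : 2*π*(x+1)*(z:ℝ) = 2*π*x*z + z*(2*π) := by ring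
    rw [e, Real.cos_add_int_mul_two_pi]
  set δ₀ := min (δ/2) (1/2) with hδ₀def
  have hδ₀pos : 0 < δ₀ := lt_min (by linarith) (by norm_num)
  have hδ₀le : δ₀ ≤ 1/2 := min_le_right _ _
  set K := Set.Icc (-(3/4):ℝ) (3/4) \ Set.Ioo (-δ₀) δ₀ with hK
  have hKc : IsCompact K := isCompact_Icc.diff isOpen_Ioo
  have hKne : K.Nonempty := by
    refine ⟨3/4, ⟨by constructor <;> norm_num, ?_⟩⟩
    simp only [Set.mem_Ioo, not_and]
    intro _
    linarith
  have hdiff : Differentiable ℝ hatα := fun x => (hatD' hC₂ hα hhat x).differentiableAt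
  have hcont : Continuous hatα := hdiff.continuous
  have hKpos : ∀ x ∈ K, 0 < hatα x := by
    rintro x ⟨⟨hx1, hx2⟩, hx3⟩
    have hx0 : δ₀ ≤ |x| := by
      by_contra hcon
      push_neg at hcon
      exact hx3 (Set.mem_Ioo.mpr (abs_lt.mp hcon))
    rcases le_or_gt |x| (1/2) with h | h
    · refine hpos x ⟨?_, ?_⟩ ?_
      · have := (abs_le.mp h).1; linarith
      · exact (abs_le.mp h).2
      · intro h0x; rw [h0x, abs_zero] at hx0; linarith
    · rcases lt_or_ge x 0 with hneg | hpos'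
      · have hax : |x| = -x := abs_of_neg hneg
        rw [← hper x]
        refine hpos (x+1) ⟨by linarith, by linarith⟩ (by intro hh; nlinarith)
      · have hax : |x| = x := abs_of_nonneg hpos'
        have hxeq : hatα x = hatα (x-1) := by
          have h' := hper (x-1)
          have e : x - 1 + 1 = x := by ring
          rw [e] at h'
          exact h'
        rw [hxeq]
        refine hpos (x-1) ⟨by linarith, by linarith⟩ (by intro hh; nlinarith)
  obtain ⟨x₀, hx₀K, hx₀min⟩ := hKc.exists_isMinOn hKne hcont.continuousOn
  have hm : 0 < hatα x₀ := hKpos x₀ hx₀K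
  refine ⟨min (A2f α 0/4) (hatα x₀ * (16/9)), lt_min (by positivity) (by positivity), ?_⟩
  intro x hx
  rcases le_or_gt |x| δ₀ with h | h
  · have h2q := hQ2 x (h.trans (min_le_left _ _))
    have : min (A2f α 0/4) (hatα x₀ * (16/9)) * x^2 ≤ (A2f α 0/4) * x^2 :=
      mul_le_mul_of_nonneg_right (min_le_left _ _) (sq_nonneg x)
    linarith
  · have hxK : x ∈ K := by
      refine ⟨⟨(abs_le.mp hx).1, (abs_le.mp hx).2⟩, ?_⟩
      intro hmem
      have := abs_lt.mpr (Set.mem_Ioo.mp hmem)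
      linarith
    have h1 : hatα x₀ ≤ hatα x := hx₀min hxK
    have hx2 : x^2 ≤ 9/16 := by nlinarith [abs_nonneg x, (abs_le.mp hx).1, (abs_le.mp hx).2, sq_abs x]
    have hcle : min (A2f α 0/4) (hatα x₀*(16/9)) * x^2 ≤ (hatα x₀*(16/9))*(9/16) :=
      mul_le_mul (min_le_right _ _) hx2 (sq_nonneg x) (by positivity)
    have he : (hatα x₀*(16/9))*(9/16) = hatα x₀ := by ring
    linarith

end

/-- second-order control of the difference quotient of the unpinned
dispersion relation `ω = √α̂` away from `k = 0`. -/
theorem dispersion_second_order_bound (α : ℤ → ℝ)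
    (hsymm : ∀ y : ℤ, α (-y) = α y)
    (hdecay : ∃ C₁ > (0:ℝ), ∃ C₂ > (0:ℝ), ∀ y : ℤ, |α y| ≤ C₁ * Real.exp (-C₂ * |(y:ℝ)|))
    (hatα : ℝ → ℝ)
    (hhat : ∀ k : ℝ, hatα k = ∑' z : ℤ, α z * Real.cos (2*π*k*z))
    (hpos : ∀ k ∈ Set.Icc (-(1:ℝ)/2) (1/2), k ≠ 0 → 0 < hatα k)
    (h0 : hatα 0 = 0)
    (h2 : 0 < iteratedDeriv 2 hatα 0)
    (p : ℝ) :
    ∃ C₄ > (0:ℝ), ∀ ε > (0:ℝ), ∀ k ∈ Set.Icc (-(1:ℝ)/2) (1/2), |k| > ε * |p| →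
      |ε⁻¹ * (Real.sqrt (hatα (k + ε*p/2)) - Real.sqrt (hatα (k - ε*p/2)))
          - p * deriv (fun k => Real.sqrt (hatα k)) k|
        ≤ ε * C₄ * |p|^2 / |k| := by
  obtain ⟨C₁, hC₁, C₂, hC₂, hα⟩ := hdecay
  have hatD : ∀ x, HasDerivAt hatα (A1f α x) x := hatD' hC₂ hα hhat
  have hA1D : ∀ x, HasDerivAt (A1f α) (A2f α x) x := A1_hasDeriv hC₂ hα
  have hA20 : 0 < A2f α 0 := by
    have e : iteratedDeriv 2 hatα 0 = A2f α 0 := by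
      have hd1 : deriv hatα = A1f α := funext fun x => (hatD x).deriv
      rw [show (2:ℕ) = 1 + 1 from rfl, iteratedDeriv_succ, iteratedDeriv_one, hd1]
      exact (hA1D 0).deriv
    rwa [e] at h2
  set S₂ : ℝ := ∑' z : ℤ, C₁ * Real.exp (-C₂*|(z:ℝ)|) * (2*π*|(z:ℝ)|)^2 with hS₂def
  have hA2b : ∀ x, |A2f α x| ≤ S₂ := A2_bound hC₂ hα
  have hA1b : ∀ x, |A1f α x| ≤ S₂ * |x| := A1_bound hC₂ hα
  have hS₂ : 0 < S₂ := lt_of_lt_of_le hA20 ((le_abs_self _).trans (hA2b 0))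
  obtain ⟨c, hc, hlow⟩ := quad_lower hC₂ hα hhat hpos h0 hA20
  have hcs : 0 < Real.sqrt c := Real.sqrt_pos.mpr hc
  set C₃ : ℝ := S₂/(2*Real.sqrt c) + S₂^2/(4*c*Real.sqrt c) with hC₃def
  have hC₃ : 0 < C₃ := by positivity
  have hposal : ∀ x : ℝ, 0 < |x| → |x| ≤ 3/4 → 0 < hatα x := by
    intro x h1 h3
    have hx0 : x ≠ 0 := abs_pos.mp h1
    exact lt_of_lt_of_le (by positivity) (hlow x h3)
  have hsq : ∀ x : ℝ, |x| ≤ 3/4 → Real.sqrt c * |x| ≤ Real.sqrt (hatα x) := by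
    intro x hx
    have := Real.sqrt_le_sqrt (hlow x hx)
    rwa [Real.sqrt_mul hc.le, Real.sqrt_sq_eq_abs] at this
  have hEb : ∀ x : ℝ, 0 < |x| → |x| ≤ 3/4 → |Ef α hatα x| ≤ C₃ / |x| :=
    fun x h1 h3 => Ef_bound hc hS₂ x (hA2b x) (hA1b x) (hsq x h3) h1
  refine ⟨C₃ + 1, by positivity, ?_⟩
  intro ε hε k hk hkp
  by_cases hp : p = 0
  · subst hp
    have e : k + ε*0/2 = k := by ring
    have e' : k - ε*0/2 = k := by ring
    rw [e, e', sub_self]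
    simp
  · have hpa : 0 < |p| := abs_pos.mpr hp
    have hk0 : 0 < |k| := lt_trans (by positivity) hkp
    have hkabs : |k| ≤ 1/2 := abs_le.mpr ⟨by linarith [hk.1], hk.2⟩
    set r := ε*|p|/2 with hrdef
    have hr : 0 < r := by positivity
    have h2r : 2*r < |k| := by
      have e2r : 2*r = ε*|p| := by rw [hrdef]; ring
      linarith [hkp]
    have hk34 : |k| ≤ 3/4 := by linarith
    have hmemI : ∀ x ∈ Set.Icc (k-r) (k+r), |k|/2 ≤ |x| ∧ |x| ≤ 3/4 := by
      intro x hx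
      have h1 : |x - k| ≤ r := abs_le.mpr ⟨by linarith [hx.1], by linarith [hx.2]⟩
      have ha2 := abs_sub_abs_le_abs_sub x k
      have ha3 := abs_sub_abs_le_abs_sub k x
      rw [abs_sub_comm k x] at ha3
      constructor <;> linarith
    have hkI : k ∈ Set.Icc (k-r) (k+r) := ⟨by linarith, by linarith⟩
    have hWD : ∀ x ∈ Set.Icc (k-r) (k+r),
        HasDerivWithinAt (Wf α hatα) (Ef α hatα x) (Set.Icc (k-r) (k+r)) x := by
      intro x hx
      obtain ⟨ha, hb⟩ := hmemI x hx
      exact (Wf_hasDeriv hC₂ hα hhat x (hposal x (by linarith) hb)).hasDerivWithinAt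
    have hEbI : ∀ x ∈ Set.Icc (k-r) (k+r), ‖Ef α hatα x‖ ≤ 2*C₃/|k| := by
      intro x hx
      obtain ⟨ha, hb⟩ := hmemI x hx
      have h1 := hEb x (by linarith) hb
      rw [Real.norm_eq_abs]
      have h2' : C₃/|x| ≤ 2*C₃/|k| := by
        rw [div_le_div_iff₀ (by linarith) (by linarith)]
        nlinarith [hC₃.le]
      linarith
    have StepA : ∀ x ∈ Set.Icc (k-r) (k+r),
        |Wf α hatα x - Wf α hatα k| ≤ (2*C₃/|k|)*r := by
      intro x hx
      have hmvt := Convex.norm_image_sub_le_of_norm_hasDerivWithin_le hWD hEbI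
        (convex_Icc _ _) hkI hx
      rw [Real.norm_eq_abs, Real.norm_eq_abs] at hmvt
      have hxk : |x - k| ≤ r := abs_le.mpr ⟨by linarith [hx.1], by linarith [hx.2]⟩
      calc |Wf α hatα x - Wf α hatα k| ≤ (2*C₃/|k|) * |x - k| := hmvt
        _ ≤ (2*C₃/|k|)*r := by
            apply mul_le_mul_of_nonneg_left hxk
            positivity
    have hsymmI : ∀ x ∈ Set.Icc (k-r) (k+r), 2*k - x ∈ Set.Icc (k-r) (k+r) := by
      intro x hx
      exact ⟨by linarith [hx.2], by linarith [hx.1]⟩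
    have hωD : ∀ x ∈ Set.Icc (k-r) (k+r),
        HasDerivAt (fun y => Real.sqrt (hatα y)) (Wf α hatα x) x := by
      intro x hx
      obtain ⟨ha, hb⟩ := hmemI x hx
      exact W_hasDeriv hC₂ hα hhat x (ne_of_gt (hposal x (by linarith) hb))
    have hGD : ∀ x ∈ Set.Icc (k-r) (k+r),
        HasDerivWithinAt
          (fun y => Real.sqrt (hatα y) - Real.sqrt (hatα (2*k - y)) - (y - k)*(2*Wf α hatα k))
          (Wf α hatα x + Wf α hatα (2*k - x) - 2*Wf α hatα k) (Set.Icc (k-r) (k+r)) x := by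
      intro x hx
      have hx' := hsymmI x hx
      have h1 := hωD x hx
      have hinner : HasDerivAt (fun y : ℝ => 2*k - y) (-1) x := by
        exact ((hasDerivAt_const x (2*k)).sub (hasDerivAt_id x)).congr_deriv (by simp)
      have hcomp : HasDerivAt (fun y => Real.sqrt (hatα (2*k - y)))
          (Wf α hatα (2*k-x) * (-1)) x :=
        HasDerivAt.comp (h₂ := fun y => Real.sqrt (hatα y)) (h := fun y => 2*k - y) x (hωD (2*k-x) hx') hinner
      have h3 : HasDerivAt (fun y : ℝ => (y - k)*(2*Wf α hatα k)) (2*Wf α hatα k) x := by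
        simpa using ((hasDerivAt_id x).sub_const k).mul_const (2*Wf α hatα k)
      have h4 := (h1.sub hcomp).sub h3
      have e : Wf α hatα x + Wf α hatα (2*k - x) - 2*Wf α hatα k
          = Wf α hatα x - Wf α hatα (2*k-x) * (-1) - 2*Wf α hatα k := by ring
      rw [e]
      exact h4.hasDerivWithinAt
    have hGb : ∀ x ∈ Set.Icc (k-r) (k+r),
        ‖Wf α hatα x + Wf α hatα (2*k - x) - 2*Wf α hatα k‖ ≤ 2*((2*C₃/|k|)*r) := by
      intro x hx
      have hx' := hsymmI x hx
      have e : Wf α hatα x + Wf α hatα (2*k-x) - 2*Wf α hatα k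
          = (Wf α hatα x - Wf α hatα k) + (Wf α hatα (2*k-x) - Wf α hatα k) := by ring
      rw [Real.norm_eq_abs, e]
      calc |(Wf α hatα x - Wf α hatα k) + (Wf α hatα (2*k-x) - Wf α hatα k)|
          ≤ |Wf α hatα x - Wf α hatα k| + |Wf α hatα (2*k-x) - Wf α hatα k| := abs_add_le _ _
        _ ≤ 2*((2*C₃/|k|)*r) := by linarith [StepA x hx, StepA (2*k-x) hx']
    have habs : |ε*p/2| = r := by
      rw [hrdef, abs_div, abs_mul, abs_of_pos hε, abs_two]
    have hkpI : k + ε*p/2 ∈ Set.Icc (k-r) (k+r) := by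
      have h1 := abs_le.mp habs.le
      exact ⟨by linarith [h1.1], by linarith [h1.2]⟩
    have StepB := Convex.norm_image_sub_le_of_norm_hasDerivWithin_le hGD hGb
      (convex_Icc _ _) hkI hkpI
    have StepB' : ‖(Real.sqrt (hatα (k+ε*p/2)) - Real.sqrt (hatα (2*k - (k+ε*p/2)))
          - ((k+ε*p/2) - k)*(2*Wf α hatα k))
        - (Real.sqrt (hatα k) - Real.sqrt (hatα (2*k - k)) - (k - k)*(2*Wf α hatα k))‖
        ≤ (2*((2*C₃/|k|)*r)) * ‖(k+ε*p/2) - k‖ := StepB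
    have e1 : 2*k - (k+ε*p/2) = k - ε*p/2 := by ring
    have e2 : 2*k - k = k := by ring
    have e3 : (k+ε*p/2) - k = ε*p/2 := by ring
    rw [e1, e2, e3] at StepB'
    have e4 : Real.sqrt (hatα k) - Real.sqrt (hatα k) - (k-k)*(2*Wf α hatα k) = 0 := by ring
    rw [e4, sub_zero, Real.norm_eq_abs, Real.norm_eq_abs, habs] at StepB'
    have hWk : deriv (fun y => Real.sqrt (hatα y)) k = Wf α hatα k := (hωD k hkI).deriv
    rw [hWk]
    have efactor : ε⁻¹ * (Real.sqrt (hatα (k+ε*p/2)) - Real.sqrt (hatα (k-ε*p/2)))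
          - p * Wf α hatα k
        = ε⁻¹ * (Real.sqrt (hatα (k+ε*p/2)) - Real.sqrt (hatα (k-ε*p/2))
            - (ε*p/2)*(2*Wf α hatα k)) := by
      field_simp
    rw [efactor, abs_mul, abs_inv, abs_of_pos hε]
    calc ε⁻¹ * |Real.sqrt (hatα (k+ε*p/2)) - Real.sqrt (hatα (k-ε*p/2))
            - (ε*p/2)*(2*Wf α hatα k)|
        ≤ ε⁻¹ * ((2*((2*C₃/|k|)*r)) * r) :=
          mul_le_mul_of_nonneg_left StepB' (inv_nonneg.mpr hε.le)
      _ = ε * C₃ * |p|^2 / |k| := by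
          rw [hrdef]
          field_simp
      _ ≤ ε * (C₃+1) * |p|^2 / |k| := by
          gcongr
          linarith
end

section
/- Let W solve ∂_t W(k,t) = γ ∫_T R(k,k')(W(k',t) − W(k,t)) dk' with initial condition W(k,0) = W₀(k), where W₀ is odd on the torus (W₀(−k) = −W₀(k)) and bounded. Then W(k,t) = W₀(k) e^{−γφ(k)t} where φ(k) = ∫_T R(k,k')dk' = (4/3)sin²(πk)(1+2cos²(πk)). -/
open Real

lemma ck_even (k x : ℝ) : collisionKernel k (-x) = collisionKernel k x := by
  simp [collisionKernel, mul_neg, sin_neg]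

lemma ck_per (k x : ℝ) : collisionKernel k (x+1) = collisionKernel k x := by
  have h1 : sin (π*(x+1)) ^ 2 = sin (π*x) ^ 2 := by
    rw [show π*(x+1) = π*x + π by ring, sin_add_pi]; ring
  have h2 : sin (2*π*(x+1)) ^ 2 = sin (2*π*x) ^ 2 := by
    rw [show 2*π*(x+1) = 2*π*x + 2*π by ring, sin_add_two_pi]
  simp [collisionKernel, h1, h2]

lemma ck_cont (k : ℝ) : Continuous fun x => collisionKernel k x := by
  unfold collisionKernel; fun_prop

lemma ck_bdd (k x : ℝ) : |collisionKernel k x| ≤ 20/3 := by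
  have s1 := neg_one_le_sin (π*x); have s2 := sin_le_one (π*x)
  have s3 := neg_one_le_sin (2*π*x); have s4 := sin_le_one (2*π*x)
  have s5 := neg_one_le_sin (π*k); have s6 := sin_le_one (π*k)
  have s7 := neg_one_le_sin (2*π*k); have s8 := sin_le_one (2*π*k)
  have b1 := sin_sq_le_one (π*x); have b2 := sin_sq_le_one (2*π*x)
  have b3 := sin_sq_le_one (π*k); have b4 := sin_sq_le_one (2*π*k)
  have c1 := sq_nonneg (sin (π*x)); have c2 := sq_nonneg (sin (2*π*x))
  have c3 := sq_nonneg (sin (π*k)); have c4 := sq_nonneg (sin (2*π*k))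
  rw [abs_le]; unfold collisionKernel; constructor <;> nlinarith [mul_nonneg c4 c1, mul_nonneg c2 c3, mul_nonneg c4 c2, mul_le_one₀ b4 c1 b1, mul_le_one₀ b2 c3 b3, mul_le_one₀ b4 c2 b2]

lemma int_sin_sq_pi : ∫ x in (0:ℝ)..1, sin (π*x)^2 = 1/2 := by
  rw [intervalIntegral.integral_comp_mul_left (fun u => sin u ^ 2) pi_ne_zero,
    mul_zero, mul_one, integral_sin_sq]
  simp [Real.sin_pi]
  field_simp

lemma int_sin_sq_two_pi : ∫ x in (0:ℝ)..1, sin (2*π*x)^2 = 1/2 := by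
  have h2 : (2*π) ≠ 0 := by positivity
  rw [intervalIntegral.integral_comp_mul_left (fun u => sin u ^ 2) h2,
    mul_zero, mul_one, integral_sin_sq]
  simp [Real.sin_two_pi]
  field_simp

lemma ck_integral (k : ℝ) : ∫ x in (0:ℝ)..1, collisionKernel k x
    = (4/3) * sin (π*k)^2 * (1 + 2 * cos (π*k)^2) := by
  have hcong : ∀ x ∈ Set.uIcc (0:ℝ) 1, collisionKernel k x =
      ((4/3) * (2 * sin (2*π*k)^2)) * sin (π*x)^2
        + ((4/3) * (2 * sin (π*k)^2 - sin (2*π*k)^2)) * sin (2*π*x)^2 := by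
    intro x _; unfold collisionKernel; ring
  rw [intervalIntegral.integral_congr hcong, intervalIntegral.integral_add,
    intervalIntegral.integral_const_mul, intervalIntegral.integral_const_mul,
    int_sin_sq_pi, int_sin_sq_two_pi]
  · have h : sin (2*π*k) = 2 * sin (π*k) * cos (π*k) := by
      rw [show 2*π*k = 2*(π*k) by ring, sin_two_mul]
    rw [h]; ring
  · exact (Continuous.intervalIntegrable (by fun_prop) _ _)
  · exact (Continuous.intervalIntegrable (by fun_prop) _ _)

lemma odd_per_integral (k : ℝ) (g : ℝ → ℝ) (hg : Continuous g)
    (hodd : ∀ x, g (-x) = -g x) (hper : ∀ x, g (x+1) = g x) :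
    ∫ x in (0:ℝ)..1, collisionKernel k x * g x = 0 := by
  set h : ℝ → ℝ := fun x => collisionKernel k x * g x with hh
  have hhper : Function.Periodic h 1 := fun x => by simp [hh, ck_per, hper]
  have h1 : (∫ x in (0:ℝ)..1, h x) = ∫ x in (-(1/2):ℝ)..(-(1/2)+1), h x := by
    have := hhper.intervalIntegral_add_eq 0 (-(1/2))
    simpa using this
  have h2 : (-(1/2):ℝ)+1 = 1/2 := by norm_num
  rw [h1, h2]
  have hsplit : (∫ x in (-(1/2):ℝ)..(1/2), h x)
      = (∫ x in (-(1/2):ℝ)..0, h x) + ∫ x in (0:ℝ)..(1/2), h x := by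
    rw [intervalIntegral.integral_add_adjacent_intervals] <;>
      exact Continuous.intervalIntegrable (by exact (ck_cont k).mul hg) _ _
  have hneg : (∫ x in (-(1/2):ℝ)..0, h x) = - ∫ x in (0:ℝ)..(1/2), h x := by
    have := intervalIntegral.integral_comp_neg (a := (0:ℝ)) (b := (1/2)) (fun x => h x)
    simp only [neg_zero] at this
    rw [← this]
    have : ∀ x, h (-x) = - h x := fun x => by simp [hh, ck_even, hodd]
    simp [this, intervalIntegral.integral_neg]
  rw [hsplit, hneg]; ring

/-- for odd bounded initial data, the solution of the homogeneous
Boltzmann equation is `W(k,t) = W₀(k) e^{-γ φ(k) t}` with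
`φ(k) = (4/3) sin²(πk)(1 + 2cos²(πk))`. -/
theorem odd_solution_decay (γ : ℝ) (hγ : 0 < γ)
    (W : ℝ → ℝ → ℝ) (W₀ : ℝ → ℝ)
    (hW₀odd : ∀ k, W₀ (-k) = -W₀ k)
    (hW₀per : ∀ k, W₀ (k + 1) = W₀ k)
    (hW₀bdd : ∃ M, ∀ k, |W₀ k| ≤ M)
    (hWper : ∀ k t, W (k + 1) t = W k t)
    (hWcont : ∀ t, Continuous fun k => W k t)
    (hWbdd : ∀ T > (0:ℝ), ∃ M, ∀ k, ∀ t ∈ Set.Icc (0:ℝ) T, |W k t| ≤ M)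
    (hinit : ∀ k, W k 0 = W₀ k)
    (hevol : ∀ k t, HasDerivAt (fun t => W k t)
      (γ * ∫ k' in (0:ℝ)..1, collisionKernel k k' * (W k' t - W k t)) t) :
    ∀ k : ℝ, ∀ t ≥ (0:ℝ),
      W k t = W₀ k *
        Real.exp (-(γ * ((4/3) * sin (π*k)^2 * (1 + 2 * cos (π*k)^2)) * t)) := by
  -- notation
  set φf : ℝ → ℝ := fun k => (4/3) * sin (π*k)^2 * (1 + 2 * cos (π*k)^2) with hφf
  set V : ℝ → ℝ → ℝ := fun k t => W₀ k * Real.exp (-(γ * φf k * t)) with hVdef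
  -- basic properties
  have hW₀cont : Continuous W₀ := by
    have : (fun k => W k 0) = W₀ := funext fun k => hinit k
    rw [← this]; exact hWcont 0
  have hφcont : Continuous φf := by rw [hφf]; fun_prop
  have hφnonneg : ∀ k, 0 ≤ φf k := by
    intro k; rw [hφf]
    have := sq_nonneg (sin (π*k)); have := sq_nonneg (cos (π*k)); positivity
  have hφeven : ∀ k, φf (-k) = φf k := by
    intro k; simp [hφf, mul_neg]
  have hφper : ∀ k, φf (k+1) = φf k := by
    intro k
    have h1 : sin (π*(k+1)) ^ 2 = sin (π*k) ^ 2 := by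
      rw [show π*(k+1) = π*k + π by ring, sin_add_pi]; ring
    have h2 : cos (π*(k+1)) ^ 2 = cos (π*k) ^ 2 := by
      rw [show π*(k+1) = π*k + π by ring, cos_add_pi]; ring
    simp [hφf, h1, h2]
  have hVcont : ∀ t, Continuous fun k => V k t := by
    intro t; rw [hVdef]; exact hW₀cont.mul (by fun_prop)
  have hVodd : ∀ k t, V (-k) t = - V k t := by
    intro k t; simp [hVdef, hφeven, hW₀odd]
  have hVper : ∀ k t, V (k+1) t = V k t := by
    intro k t; simp [hVdef, hφper, hW₀per]
  -- V solves the same equation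
  have hVderiv : ∀ k t, HasDerivAt (fun t => V k t)
      (γ * ∫ x in (0:ℝ)..1, collisionKernel k x * (V x t - V k t)) t := by
    intro k t
    have h1 : HasDerivAt (fun t : ℝ => -(γ * φf k * t)) (-(γ * φf k)) t := by
      have h := ((hasDerivAt_id t).const_mul (γ * φf k)).neg; rw [mul_one] at h; exact h
    have h2 := (h1.exp).const_mul (W₀ k)
    have hI : (∫ x in (0:ℝ)..1, collisionKernel k x * (V x t - V k t))
        = - (φf k * V k t) := by
      have hsub : ∀ x ∈ Set.uIcc (0:ℝ) 1, collisionKernel k x * (V x t - V k t)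
          = collisionKernel k x * V x t - collisionKernel k x * V k t := by
        intro x _; ring
      rw [intervalIntegral.integral_congr hsub, intervalIntegral.integral_sub
        (Continuous.intervalIntegrable (u := fun x => collisionKernel k x * V x t) ((ck_cont k).mul (hVcont t)) _ _)
        (Continuous.intervalIntegrable (u := fun x => collisionKernel k x * V k t) ((ck_cont k).mul continuous_const) _ _),
        intervalIntegral.integral_mul_const,
        odd_per_integral k (fun x => V x t) (hVcont t) (fun x => hVodd x t)
          (fun x => hVper x t), ck_integral k]
      rw [hφf]; ring
    rw [hI]
    refine h2.congr_deriv ?_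
    rw [hVdef]; ring
  -- the difference D
  set D : ℝ → ℝ → ℝ := fun k t => W k t - V k t with hDdef
  have hDcont : ∀ t, Continuous fun k => D k t := fun t => (hWcont t).sub (hVcont t)
  have hDderiv : ∀ k t, HasDerivAt (fun t => D k t)
      (γ * ∫ x in (0:ℝ)..1, collisionKernel k x * (D x t - D k t)) t := by
    intro k t
    have h := (hevol k t).sub (hVderiv k t)
    have heq : γ * (∫ x in (0:ℝ)..1, collisionKernel k x * (W x t - W k t))
        - γ * (∫ x in (0:ℝ)..1, collisionKernel k x * (V x t - V k t))
        = γ * ∫ x in (0:ℝ)..1, collisionKernel k x * (D x t - D k t) := by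
      rw [← mul_sub, ← intervalIntegral.integral_sub
        (Continuous.intervalIntegrable (u := fun x => collisionKernel k x * (W x t - W k t)) ((ck_cont k).mul ((hWcont t).sub continuous_const)) _ _)
        (Continuous.intervalIntegrable (u := fun x => collisionKernel k x * (V x t - V k t)) ((ck_cont k).mul ((hVcont t).sub continuous_const)) _ _)]
      congr 1
      apply intervalIntegral.integral_congr
      intro x _
      simp only [hDdef]; ring
    rw [heq] at h
    exact h
  have hD0 : ∀ k, D k 0 = 0 := by
    intro k; simp [hDdef, hVdef, hinit]
  -- derivative bound
  have hFbound : ∀ (B : ℝ) (k s : ℝ), (∀ x, |D x s| ≤ B) →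
      |γ * ∫ x in (0:ℝ)..1, collisionKernel k x * (D x s - D k s)| ≤ γ * (40/3) * B := by
    intro B k s hB
    have hI : ‖∫ x in (0:ℝ)..1, collisionKernel k x * (D x s - D k s)‖ ≤ (20/3 * (2*B)) * |1 - 0| := by
      apply intervalIntegral.norm_integral_le_of_norm_le_const
      intro x _
      have h1 := ck_bdd k x
      have h2 : |D x s - D k s| ≤ 2 * B := by
        have := hB x; have := hB k
        have := abs_sub (D x s) (D k s)
        calc |D x s - D k s| ≤ |D x s| + |D k s| := abs_sub _ _
          _ ≤ 2 * B := by linarith [hB x, hB k]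
      have hBnn : (0:ℝ) ≤ B := le_trans (abs_nonneg _) (hB k)
      calc ‖collisionKernel k x * (D x s - D k s)‖
          = |collisionKernel k x| * |D x s - D k s| := abs_mul _ _
        _ ≤ (20/3) * (2*B) := by
            apply mul_le_mul h1 h2 (abs_nonneg _) (by norm_num)
    rw [abs_mul, abs_of_pos hγ, ← Real.norm_eq_abs]
    calc γ * ‖∫ x in (0:ℝ)..1, collisionKernel k x * (D x s - D k s)‖
        ≤ γ * ((20/3 * (2*B)) * |1 - 0|) := by
          exact mul_le_mul_of_nonneg_left hI hγ.le
      _ = γ * (40/3) * B := by norm_num; ring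
  -- main claim: D vanishes for t ≥ 0
  suffices hmain : ∀ k t, 0 ≤ t → D k t = 0 by
    intro k t ht
    have := hmain k t ht
    have : W k t = V k t := by
      have h := this; simp only [hDdef] at h; linarith
    rw [this, hVdef]
  intro k₀ t₀ ht₀
  rcases eq_or_lt_of_le ht₀ with h0 | h0
  · rw [← h0]; exact hD0 k₀
  set T := t₀ with hT
  obtain ⟨M, hM⟩ := hWbdd T h0
  obtain ⟨M₀, hM₀⟩ := hW₀bdd
  set B := |M| + |M₀| with hB
  have hBnn : 0 ≤ B := by positivity
  have hDB : ∀ x, ∀ t ∈ Set.Icc (0:ℝ) T, |D x t| ≤ B := by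
    intro x t ht
    have h1 : |W x t| ≤ |M| := le_trans (hM x t ht) (le_abs_self M)
    have h2 : |V x t| ≤ |M₀| := by
      rw [hVdef, abs_mul]
      have he : Real.exp (-(γ * φf x * t)) ≤ 1 := by
        rw [Real.exp_le_one_iff]
        have h3 : 0 ≤ γ * φf x * t := mul_nonneg (mul_nonneg hγ.le (hφnonneg x)) ht.1
        linarith
      have hepos : (0:ℝ) < Real.exp (-(γ * φf x * t)) := Real.exp_pos _
      calc |W₀ x| * |Real.exp (-(γ * φf x * t))|
          ≤ |M₀| * 1 := by
            apply mul_le_mul (le_trans (hM₀ x) (le_abs_self M₀)) _ (abs_nonneg _) (abs_nonneg _)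
            rw [abs_of_pos hepos]; exact he
        _ = |M₀| := mul_one _
    calc |D x t| ≤ |W x t| + |V x t| := abs_sub _ _
      _ ≤ B := by rw [hB]; linarith
  set L := γ * (40/3) with hL
  have hLpos : 0 < L := by rw [hL]; positivity
  set δ := min T (1/(2*L)) with hδ
  have hδpos : 0 < δ := lt_min h0 (by positivity)
  have hδT : δ ≤ T := min_le_left _ _
  have hδL : L * δ ≤ 1/2 := by
    have : δ ≤ 1/(2*L) := min_le_right _ _
    calc L * δ ≤ L * (1/(2*L)) := mul_le_mul_of_nonneg_left this hLpos.le
      _ = 1/2 := by field_simp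
  -- one step of the contraction
  have hstep : ∀ a, 0 ≤ a → a ≤ T → (∀ x, D x a = 0) →
      ∀ x, ∀ t ∈ Set.Icc a (min (a+δ) T), D x t = 0 := by
    intro a ha haT hDa x t ht
    have hab : a ≤ min (a+δ) T := le_min (by linarith [hδpos.le]) haT
    have hIccsub : Set.Icc a (min (a+δ) T) ⊆ Set.Icc 0 T := by
      apply Set.Icc_subset_Icc ha (min_le_right _ _)
    have key : ∀ m : ℕ, ∀ y, ∀ s ∈ Set.Icc a (min (a+δ) T), |D y s| ≤ B / 2^m := by
      intro m
      induction m with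
      | zero => intro y s hs; simpa using hDB y s (hIccsub hs)
      | succ m ih =>
        intro y s hs
        have hderivW : ∀ u ∈ Set.Icc a (min (a+δ) T),
            HasDerivWithinAt (fun t => D y t)
              (γ * ∫ x in (0:ℝ)..1, collisionKernel y x * (D x u - D y u))
              (Set.Icc a (min (a+δ) T)) u :=
          fun u _ => (hDderiv y u).hasDerivWithinAt
        have hbound : ∀ u ∈ Set.Icc a (min (a+δ) T),
            ‖γ * ∫ x in (0:ℝ)..1, collisionKernel y x * (D x u - D y u)‖ ≤ L * (B / 2^m) := by
          intro u hu
          rw [Real.norm_eq_abs, hL]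
          exact hFbound (B / 2^m) y u (fun x => ih x u hu)
        have hmvt := Convex.norm_image_sub_le_of_norm_hasDerivWithin_le hderivW hbound
          (convex_Icc _ _) (Set.left_mem_Icc.2 hab) hs
        rw [hDa y, sub_zero, Real.norm_eq_abs, Real.norm_eq_abs] at hmvt
        have hsa : |s - a| ≤ δ := by
          rw [abs_of_nonneg (by linarith [hs.1])]
          have := hs.2
          have := min_le_left (a+δ) T
          linarith [le_trans hs.2 (min_le_left (a+δ) T)]
        calc |D y s| ≤ L * (B / 2^m) * |s - a| := hmvt
          _ ≤ L * (B / 2^m) * δ := by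
              apply mul_le_mul_of_nonneg_left hsa
              positivity
          _ = (L * δ) * (B / 2^m) := by ring
          _ ≤ (1/2) * (B / 2^m) := by
              apply mul_le_mul_of_nonneg_right hδL
              positivity
          _ = B / 2^(m+1) := by rw [pow_succ]; ring
    -- conclude D x t = 0
    have htend : Filter.Tendsto (fun m : ℕ => B / 2^m) Filter.atTop (nhds 0) := by
      apply Filter.Tendsto.div_atTop tendsto_const_nhds
      exact tendsto_pow_atTop_atTop_of_one_lt one_lt_two
    have hle : |D x t| ≤ 0 := ge_of_tendsto htend (Filter.Eventually.of_forall fun m => key m x t ht)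
    exact abs_eq_zero.1 (le_antisymm hle (abs_nonneg _))
  -- iterate
  have hiter : ∀ n : ℕ, ∀ x, ∀ t ∈ Set.Icc 0 (min ((n:ℝ)*δ) T), D x t = 0 := by
    intro n
    induction n with
    | zero =>
      intro x t ht
      simp only [Nat.cast_zero, zero_mul] at ht
      have : min (0:ℝ) T = 0 := min_eq_left h0.le
      rw [this] at ht
      have : t = 0 := le_antisymm ht.2 ht.1
      rw [this]; exact hD0 x
    | succ n ih =>
      intro x t ht
      set a := min ((n:ℝ)*δ) T with ha
      have ha0 : 0 ≤ a := le_min (by positivity) h0.le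
      have haT : a ≤ T := min_le_right _ _
      have hDa : ∀ y, D y a = 0 := fun y => ih y a ⟨ha0, le_refl _⟩
      rcases le_or_gt t a with hta | hta
      · exact ih x t ⟨ht.1, hta⟩
      · apply hstep a ha0 haT hDa x t
        have htT : t ≤ T := le_trans ht.2 (min_le_right _ _)
        have htδ : t ≤ a + δ := by
          rcases le_or_gt ((n:ℝ)*δ) T with hc | hc
          · have hae : a = (n:ℝ)*δ := min_eq_left hc
            have h1 : t ≤ ((n:ℝ)+1)*δ := by
              have h2 := le_trans ht.2 (min_le_left _ _)
              push_cast at h2; linarith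
            rw [hae]; linarith
          · have hae : a = T := min_eq_right hc.le
            rw [hae]; linarith [hδpos]
        exact ⟨hta.le, le_min htδ htT⟩
  obtain ⟨n, hn⟩ := exists_nat_ge (T/δ)
  have hTn : T ≤ (n:ℝ)*δ := by
    rw [div_le_iff₀ hδpos] at hn
    linarith
  have : min ((n:ℝ)*δ) T = T := min_eq_right hTn
  exact hiter n k₀ t₀ ⟨ht₀, by rw [this]⟩
end
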